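/- Let M be symmetric positive definite, A ∈ ℝ^{m×n} of rank n, and suppose V, Q, B satisfy the generalized Golub–Kahan bidiagonalization relations A Q = M V [B; 0], Aᵀ V = N Q [Bᵀ, 0], Vᵀ M V = I_m, Qᵀ N Q = I_n, with B invertible. Then the saddle-point system M u + A p = 0, Aᵀ u = b is equivalent, under u = V ẑ and p = Q ŷ, to the reduced system ẑ₁ + B ŷ = 0, Bᵀ ẑ₁ = Qᵀ b, with ẑ = (ẑ₁, 0), i.e. the last m−n components of ẑ vanish. -/

import Mathlib

open Matrix

/-- Rows of the m-dimensional space are indexed by `Fin n ⊕ Fin k` (so `m = n + k`). -/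
theorem stmt_5 {n k : ℕ}
    (M : Matrix (Fin n ⊕ Fin k) (Fin n ⊕ Fin k) ℝ)
    (A : Matrix (Fin n ⊕ Fin k) (Fin n) ℝ)
    (N B : Matrix (Fin n) (Fin n) ℝ)
    (V : Matrix (Fin n ⊕ Fin k) (Fin n ⊕ Fin k) ℝ)
    (Q : Matrix (Fin n) (Fin n) ℝ)
    (b : Fin n → ℝ)
    (hM : M.PosDef) (hN : N.PosDef)
    (hA : A.rank = n)
    (hbidiag : ∀ i j : Fin n, (j : ℕ) ≠ i → (j : ℕ) ≠ i + 1 → B i j = 0)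
    (hB : IsUnit B)
    (hAQ : A * Q = M * V * Matrix.fromRows B (0 : Matrix (Fin k) (Fin n) ℝ))
    (hAV : Aᵀ * V = N * Q * Matrix.fromCols Bᵀ (0 : Matrix (Fin n) (Fin k) ℝ))
    (hV : Vᵀ * M * V = 1) (hQ : Qᵀ * N * Q = 1)
    (zhat : Fin n ⊕ Fin k → ℝ) (yhat : Fin n → ℝ)
    (u : Fin n ⊕ Fin k → ℝ) (p : Fin n → ℝ)
    (hu : u = V *ᵥ zhat) (hp : p = Q *ᵥ yhat) :
    (M *ᵥ u + A *ᵥ p = 0 ∧ Aᵀ *ᵥ u = b) ↔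
      ((zhat ∘ Sum.inl) + B *ᵥ yhat = 0 ∧
        Bᵀ *ᵥ (zhat ∘ Sum.inl) = Qᵀ *ᵥ b ∧
        ∀ i : Fin k, zhat (Sum.inr i) = 0) := by
  subst hu hp
  have hV' : Vᵀ * (M * V) = 1 := by rw [← Matrix.mul_assoc]; exact hV
  have hQ' : Qᵀ * (N * Q) = 1 := by rw [← Matrix.mul_assoc]; exact hQ
  have hNQQ : (N * Q) * Qᵀ = 1 := mul_eq_one_comm.mp hQ'
  -- first equation rewritten
  have keyA : M *ᵥ (V *ᵥ zhat) + A *ᵥ (Q *ᵥ yhat)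
      = (M * V) *ᵥ (zhat + Matrix.fromRows B (0 : Matrix (Fin k) (Fin n) ℝ) *ᵥ yhat) := by
    rw [Matrix.mulVec_add, Matrix.mulVec_mulVec, Matrix.mulVec_mulVec, Matrix.mulVec_mulVec,
      hAQ, Matrix.mul_assoc]
  have hz : zhat = Sum.elim (zhat ∘ Sum.inl) (zhat ∘ Sum.inr) := by
    funext x; cases x <;> rfl
  have hG : Matrix.fromCols Bᵀ (0 : Matrix (Fin n) (Fin k) ℝ) *ᵥ zhat
      = Bᵀ *ᵥ (zhat ∘ Sum.inl) := by
    conv_lhs => rw [hz]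
    rw [Matrix.fromCols_mulVec_sumElim]
    simp
  have keyB : Aᵀ *ᵥ (V *ᵥ zhat) = (N * Q) *ᵥ (Bᵀ *ᵥ (zhat ∘ Sum.inl)) := by
    rw [Matrix.mulVec_mulVec, hAV, ← hG, Matrix.mulVec_mulVec]
  have eq1 : (M *ᵥ (V *ᵥ zhat) + A *ᵥ (Q *ᵥ yhat) = 0)
      ↔ zhat + Matrix.fromRows B (0 : Matrix (Fin k) (Fin n) ℝ) *ᵥ yhat = 0 := by
    rw [keyA]
    constructor
    · intro h
      have := congrArg (fun w => Vᵀ *ᵥ w) h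
      simpa [Matrix.mulVec_mulVec, ← Matrix.mul_assoc, hV] using this
    · intro h; rw [h, Matrix.mulVec_zero]
  have eq2 : (Aᵀ *ᵥ (V *ᵥ zhat) = b) ↔ Bᵀ *ᵥ (zhat ∘ Sum.inl) = Qᵀ *ᵥ b := by
    rw [keyB]
    constructor
    · intro h
      have := congrArg (fun w => Qᵀ *ᵥ w) h
      simpa [Matrix.mulVec_mulVec, ← Matrix.mul_assoc, hQ] using this
    · intro h
      rw [h, Matrix.mulVec_mulVec, hNQQ, Matrix.one_mulVec]
  rw [eq1, eq2]
  constructor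
  · rintro ⟨h1, h2⟩
    refine ⟨?_, h2, ?_⟩
    · funext i
      have := congrFun h1 (Sum.inl i)
      simpa [Matrix.fromRows_mulVec] using this
    · intro i
      have := congrFun h1 (Sum.inr i)
      simpa [Matrix.fromRows_mulVec] using this
  · rintro ⟨h1, h2, h3⟩
    refine ⟨?_, h2⟩
    funext x
    cases x with
    | inl i => simpa [Matrix.fromRows_mulVec] using congrFun h1 i
    | inr i => simpa [Matrix.fromRows_mulVec] using h3 i
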